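/- The recurrence e(n+1) = e(n) + (α n + θ e(n)) / (n + α + β − 1) with e(1) = 0, parameters α > 0, β ≥ 0, and 0 ≤ θ < 1, satisfies e(n)/n → α/(1−θ) as n → ∞. -/

import Mathlib

open Filter

set_option maxHeartbeats 1000000 in
/-- Subcritical DAPA regime: the recurrence
`e(n+1) = e(n) + (α n + θ e(n)) / (n + α + β − 1)` with `e 1 = 0`, `α > 0`, `β ≥ 0`,
`0 ≤ θ < 1` satisfies `e(n)/n → α/(1−θ)`. -/
theorem stmt_6 (α β θ : ℝ) (hα : 0 < α) (hβ : 0 ≤ β) (hθ0 : 0 ≤ θ) (hθ1 : θ < 1)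
    (e : ℕ → ℝ) (h1 : e 1 = 0)
    (hrec : ∀ n : ℕ, 1 ≤ n →
      e (n + 1) = e n + (α * n + θ * e n) / (n + α + β - 1)) :
    Tendsto (fun n : ℕ => e n / n) atTop (nhds (α / (1 - θ))) := by
  have hδ : 0 < 1 - θ := by linarith
  obtain ⟨s, hs⟩ : ∃ s : ℝ, s = α + β - 1 := ⟨_, rfl⟩
  obtain ⟨L, hL⟩ : ∃ L : ℝ, L = α / (1 - θ) := ⟨_, rfl⟩
  obtain ⟨y, hy⟩ : ∃ y : ℕ → ℝ, y = fun n => e n / n - L := ⟨_, rfl⟩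
  obtain ⟨C, hC⟩ : ∃ C : ℝ, C = 2 * |s| * |L| + 1 := ⟨_, rfl⟩
  have hCpos : 0 < C := by rw [hC]; positivity
  have hcpos : ∀ n : ℕ, 1 ≤ n → 0 < (n : ℝ) + s := by
    intro n hn
    have h1n : (1 : ℝ) ≤ n := by exact_mod_cast hn
    have : -1 < s := by simp only [hs]; linarith
    linarith
  -- exact one-step identity for y
  have key : ∀ n : ℕ, 1 ≤ n →
      y (n + 1) = ((n : ℝ) * (((n : ℝ) + s) + θ) / (((n : ℝ) + 1) * ((n : ℝ) + s))) * y n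
        - s * L / (((n : ℝ) + 1) * ((n : ℝ) + s)) := by
    intro n hn
    have hc := hcpos n hn
    have hn0 : (0 : ℝ) < n := by exact_mod_cast hn
    have hc' : (n : ℝ) + α + β - 1 ≠ 0 := by
      intro h; simp only [hs] at hc; linarith
    have hrecn := hrec n hn
    have hne1 : ((n : ℝ) + 1) ≠ 0 := by positivity
    have hne2 : (n : ℝ) ≠ 0 := ne_of_gt hn0
    have hne3 : (n : ℝ) + (α + β - 1) ≠ 0 := by
      intro h; simp only [hs] at hc; linarith
    have h1θ : (1 : ℝ) - θ ≠ 0 := ne_of_gt hδ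
    simp only [hy, hL, hs]
    push_cast
    rw [hrecn]
    field_simp
    ring
  -- the one-step inequality, valid for large n
  obtain ⟨N₀, hN₀⟩ := exists_nat_ge (2 * |s| / (1 - θ) + 2 * |s| + 1)
  have step : ∀ n : ℕ, N₀ ≤ n →
      |y (n + 1)| ≤ (1 - (1 - θ) / (8 * n)) * |y n| + C / (n : ℝ) ^ 2 := by
    intro n hn
    have hnN : (N₀ : ℝ) ≤ n := by exact_mod_cast hn
    have hnb : 2 * |s| / (1 - θ) + 2 * |s| + 1 ≤ (n : ℝ) := le_trans hN₀ hnN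
    have hs0 : 0 ≤ |s| := abs_nonneg s
    have hn1 : (1 : ℝ) ≤ n := by
      have : 0 ≤ 2 * |s| / (1 - θ) := by positivity
      linarith
    have hn1' : 1 ≤ n := by exact_mod_cast hn1
    have hn2s : 2 * |s| ≤ (n : ℝ) := by
      have : 0 ≤ 2 * |s| / (1 - θ) := by positivity
      linarith
    have hnθs : 2 * |s| ≤ (1 - θ) * n := by
      have h' : 2 * |s| / (1 - θ) ≤ (n : ℝ) := by linarith
      calc 2 * |s| = (2 * |s| / (1 - θ)) * (1 - θ) := by field_simp
        _ ≤ (n : ℝ) * (1 - θ) := by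
            apply mul_le_mul_of_nonneg_right h' (le_of_lt hδ)
        _ = (1 - θ) * n := by ring
    have hc := hcpos n hn1'
    have hn0 : (0 : ℝ) < n := by linarith
    have hsabs : -|s| ≤ s ∧ s ≤ |s| := ⟨neg_abs_le s, le_abs_self s⟩
    have hd : 0 < ((n : ℝ) + 1) * ((n : ℝ) + s) := by positivity
    rw [key n hn1']
    have ha0 : 0 ≤ (n : ℝ) * (((n : ℝ) + s) + θ) / (((n : ℝ) + 1) * ((n : ℝ) + s)) := by
      apply div_nonneg _ (le_of_lt hd)
      have : 0 ≤ ((n : ℝ) + s) + θ := by linarith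
      positivity
    have hA : ((n : ℝ) + 1) * ((n : ℝ) + s) ≤ 4 * (n : ℝ) ^ 2 := by
      nlinarith [hsabs.2, hn2s, hn1]
    have hB : 4 * (1 - θ) * (n : ℝ) ^ 2 ≤ ((1 - θ) * (n : ℝ) + s) * (8 * (n : ℝ)) := by
      nlinarith [mul_le_mul_of_nonneg_left hnθs (le_of_lt hn0), hsabs.1, hn0]
    have hkey : ((1 - θ) / (8 * (n : ℝ))) * (((n : ℝ) + 1) * ((n : ℝ) + s))
        ≤ (1 - θ) * (n : ℝ) + s := by
      rw [div_mul_eq_mul_div, div_le_iff₀ (by positivity : (0:ℝ) < 8 * (n : ℝ))]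
      nlinarith [mul_le_mul_of_nonneg_left hA (le_of_lt hδ)]
    have ha1 : (n : ℝ) * (((n : ℝ) + s) + θ) / (((n : ℝ) + 1) * ((n : ℝ) + s))
        ≤ 1 - (1 - θ) / (8 * n) := by
      rw [div_le_iff₀ hd]
      nlinarith [hkey]
    have hd2 : (n : ℝ) ^ 2 ≤ 2 * (((n : ℝ) + 1) * ((n : ℝ) + s)) := by
      nlinarith [hsabs.1, hn2s, hn1, hn0]
    have hr : |s * L / (((n : ℝ) + 1) * ((n : ℝ) + s))| ≤ C / (n : ℝ) ^ 2 := by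
      rw [abs_div, abs_of_pos hd, abs_mul, div_le_div_iff₀ hd (by positivity), hC]
      nlinarith [mul_le_mul_of_nonneg_left hd2 (mul_nonneg hs0 (abs_nonneg L)), hd,
        mul_nonneg hs0 (abs_nonneg L)]
    calc |((n : ℝ) * (((n : ℝ) + s) + θ) / (((n : ℝ) + 1) * ((n : ℝ) + s))) * y n
          - s * L / (((n : ℝ) + 1) * ((n : ℝ) + s))|
        ≤ |((n : ℝ) * (((n : ℝ) + s) + θ) / (((n : ℝ) + 1) * ((n : ℝ) + s))) * y n|
          + |s * L / (((n : ℝ) + 1) * ((n : ℝ) + s))| := abs_sub _ _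
      _ ≤ (1 - (1 - θ) / (8 * n)) * |y n| + C / (n : ℝ) ^ 2 := by
          apply add_le_add _ hr
          rw [abs_mul, abs_of_nonneg ha0]
          exact mul_le_mul_of_nonneg_right ha1 (abs_nonneg _)
  -- for every ε > 0, eventually |y n| ≤ ε
  have main : ∀ ε : ℝ, 0 < ε → ∀ᶠ n in atTop, |y n| ≤ ε := by
    intro ε hε
    obtain ⟨N₂, hN₂⟩ := exists_nat_ge (16 * C / ((1 - θ) * ε))
    set N₁ : ℕ := max (max N₀ N₂) 1 with hN₁
    have hN₁0 : N₀ ≤ N₁ := le_trans (le_max_left _ _) (le_max_left _ _)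
    have hN₁2 : N₂ ≤ N₁ := le_trans (le_max_right _ _) (le_max_left _ _)
    have hN₁1 : 1 ≤ N₁ := le_max_right _ _
    have hrC : ∀ n : ℕ, N₁ ≤ n → C / (n : ℝ) ^ 2 ≤ (1 - θ) * ε / (16 * n) := by
      intro n hn
      have hn1 : (1 : ℝ) ≤ n := by exact_mod_cast le_trans hN₁1 hn
      have hn0 : (0 : ℝ) < n := by linarith
      have h16 : 16 * C / ((1 - θ) * ε) ≤ (n : ℝ) := by
        calc 16 * C / ((1 - θ) * ε) ≤ (N₂ : ℝ) := hN₂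
          _ ≤ (n : ℝ) := by exact_mod_cast le_trans hN₁2 hn
      rw [div_le_div_iff₀ (by positivity) (by positivity)]
      have h' : 16 * C ≤ (n : ℝ) * ((1 - θ) * ε) := by
        rw [div_le_iff₀ (by positivity)] at h16
        linarith
      nlinarith
    have hstep' : ∀ n : ℕ, N₁ ≤ n →
        |y (n + 1)| ≤ (1 - (1 - θ) / (8 * n)) * |y n| + (1 - θ) * ε / (16 * n) :=
      fun n hn => le_trans (step n (le_trans hN₁0 hn)) (by linarith [hrC n hn])
    have hcoef : ∀ n : ℕ, N₁ ≤ n → 0 ≤ 1 - (1 - θ) / (8 * n) ∧ (1 - θ) / (8 * n) ≤ 1 := by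
      intro n hn
      have hn1 : (1 : ℝ) ≤ n := by exact_mod_cast le_trans hN₁1 hn
      have h8 : (0 : ℝ) < 8 * n := by linarith
      have : (1 - θ) / (8 * n) ≤ 1 := by
        rw [div_le_one h8]; linarith
      exact ⟨by linarith, this⟩
    -- invariance
    have hinv : ∀ n : ℕ, N₁ ≤ n → |y n| ≤ ε → |y (n + 1)| ≤ ε := by
      intro n hn hyn
      have hn1 : (1 : ℝ) ≤ n := by exact_mod_cast le_trans hN₁1 hn
      have h8 : (0 : ℝ) < 8 * n := by linarith
      have hco := (hcoef n hn).1
      calc |y (n + 1)| ≤ (1 - (1 - θ) / (8 * n)) * |y n| + (1 - θ) * ε / (16 * n) :=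
            hstep' n hn
        _ ≤ (1 - (1 - θ) / (8 * n)) * ε + (1 - θ) * ε / (16 * n) :=
            by apply add_le_add_left; exact mul_le_mul_of_nonneg_left hyn hco
        _ = ε - (1 - θ) * ε / (16 * n) := by field_simp; ring
        _ ≤ ε := by
            have : 0 ≤ (1 - θ) * ε / (16 * n) := by positivity
            linarith
    -- descent: there exists m ≥ N₁ with |y m| ≤ ε
    have hdesc : ∃ m : ℕ, N₁ ≤ m ∧ |y m| ≤ ε := by
      by_contra hcon
      push_neg at hcon
      have hbig : ∀ n : ℕ, N₁ ≤ n → ε < |y n| := fun n hn => hcon n hn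
      have hdec : ∀ n : ℕ, N₁ ≤ n →
          |y (n + 1)| ≤ |y n| - (1 - θ) * ε / (16 * n) := by
        intro n hn
        have hn1 : (1 : ℝ) ≤ n := by exact_mod_cast le_trans hN₁1 hn
        have h8 : (0 : ℝ) < 8 * n := by linarith
        have hco := (hcoef n hn).1
        have hb := le_of_lt (hbig n hn)
        calc |y (n + 1)| ≤ (1 - (1 - θ) / (8 * n)) * |y n| + (1 - θ) * ε / (16 * n) :=
              hstep' n hn
          _ = |y n| - ((1 - θ) / (8 * n)) * |y n| + (1 - θ) * ε / (16 * n) := by ring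
          _ ≤ |y n| - ((1 - θ) / (8 * n)) * ε + (1 - θ) * ε / (16 * n) := by
              have : ((1 - θ) / (8 * n)) * ε ≤ ((1 - θ) / (8 * n)) * |y n| :=
                mul_le_mul_of_nonneg_left hb (by positivity)
              linarith
          _ = |y n| - (1 - θ) * ε / (16 * n) := by field_simp; ring
      -- telescoping bound
      have htel : ∀ k : ℕ, |y (N₁ + k)| ≤ |y N₁|
          - ((1 - θ) * ε / 16) * ∑ i ∈ Finset.range k, (1 : ℝ) / (N₁ + i) := by
        intro k
        induction k with
        | zero => simp
        | succ k ih =>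
          have hge : N₁ ≤ N₁ + k := Nat.le_add_right _ _
          have h1 := hdec (N₁ + k) hge
          rw [Finset.sum_range_succ]
          have hcast : ((N₁ + k : ℕ) : ℝ) = (N₁ : ℝ) + k := by push_cast; ring
          have : (1 - θ) * ε / (16 * ((N₁ : ℝ) + k))
              = ((1 - θ) * ε / 16) * ((1 : ℝ) / ((N₁ : ℝ) + k)) := by
            have hp : (0 : ℝ) < (N₁ : ℝ) + k := by
              have : (1 : ℝ) ≤ (N₁ : ℝ) := by exact_mod_cast hN₁1
              have : (0 : ℝ) ≤ (k : ℝ) := Nat.cast_nonneg k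
              linarith
            field_simp
          rw [hcast] at h1
          rw [this] at h1
          have h2 : N₁ + k + 1 = N₁ + (k + 1) := by ring
          rw [h2] at h1
          linarith
      -- the harmonic sum diverges
      have hharm : Tendsto (fun k => ∑ i ∈ Finset.range k, (1 : ℝ) / (N₁ + i)) atTop atTop := by
        have hcmp : ∀ k : ℕ, (1 / (N₁ : ℝ)) * ∑ i ∈ Finset.range k, (1 : ℝ) / (i + 1)
            ≤ ∑ i ∈ Finset.range k, (1 : ℝ) / (N₁ + i) := by
          intro k
          rw [Finset.mul_sum]
          apply Finset.sum_le_sum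
          intro i _
          have hN : (1 : ℝ) ≤ (N₁ : ℝ) := by exact_mod_cast hN₁1
          have hi : (0 : ℝ) ≤ i := Nat.cast_nonneg i
          rw [div_mul_div_comm, one_mul]
          apply one_div_le_one_div_of_le (by linarith)
          nlinarith
        have hbase := Real.tendsto_sum_range_one_div_nat_succ_atTop
        have hNpos : (0 : ℝ) < 1 / (N₁ : ℝ) := by
          have : (1 : ℝ) ≤ (N₁ : ℝ) := by exact_mod_cast hN₁1
          positivity
        have h2 : Tendsto (fun k => (1 / (N₁ : ℝ)) * ∑ i ∈ Finset.range k, (1 : ℝ) / (i + 1))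
            atTop atTop := by
          apply Tendsto.const_mul_atTop hNpos
          refine hbase.congr fun k => Finset.sum_congr rfl fun i _ => ?_
          push_cast
          ring
        exact tendsto_atTop_mono hcmp h2
      have hcε : 0 < (1 - θ) * ε / 16 := by positivity
      obtain ⟨k, hk⟩ := (tendsto_atTop.mp hharm ((|y N₁| + 1) / ((1 - θ) * ε / 16))).exists
      have hk' : |y N₁| + 1 ≤ ((1 - θ) * ε / 16) * ∑ i ∈ Finset.range k, (1 : ℝ) / (N₁ + i) := by
        rw [div_le_iff₀ hcε] at hk
        linarith [hk]
      have := htel k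
      have habs : (0 : ℝ) ≤ |y (N₁ + k)| := abs_nonneg _
      linarith
    obtain ⟨m, hm, hym⟩ := hdesc
    rw [eventually_atTop]
    refine ⟨m, fun n hn => ?_⟩
    -- induction from m
    obtain ⟨p, rfl⟩ := Nat.exists_eq_add_of_le hn
    clear hn
    induction p with
    | zero => simpa using hym
    | succ p ih =>
      have h2 : m + (p + 1) = (m + p) + 1 := by ring
      rw [h2]
      exact hinv (m + p) (le_trans hm (Nat.le_add_right _ _)) ih
  -- conclude
  have hy0 : Tendsto y atTop (nhds 0) := by
    rw [Metric.tendsto_atTop]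
    intro ε hε
    have := (main (ε / 2) (by linarith)).exists_forall_of_atTop
    obtain ⟨N, hN⟩ := eventually_atTop.mp (main (ε / 2) (by linarith))
    refine ⟨N, fun n hn => ?_⟩
    rw [Real.dist_eq, sub_zero]
    calc |y n| ≤ ε / 2 := hN n hn
      _ < ε := by linarith
  have : Tendsto (fun n : ℕ => y n + L) atTop (nhds (0 + L)) := hy0.add_const L
  rw [zero_add] at this
  have hfun : (fun n : ℕ => e n / n) = fun n : ℕ => y n + L := by
    funext n
    rw [hy]
    ring
  rw [hfun, ← hL]
  exact this
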